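/- Let a^{[k]}_j, j ∈ ℤ, k ∈ ℕ₀, be finitely supported complex masks with symbols a^{[k]}(z) = ∑_j a^{[k]}_j z^j, let λ ∈ ℂ and μ ≥ 1 an integer. Then the functions f_r(x) = x^r e^{λx} are reproduced stepwise (i.e., at every level k) for all r = 0,...,μ-1 if and only if for all k ∈ ℕ₀: a^{[k]}(-exp(-2^{-(k+1)}λ)) = 0, a^{[k]}(exp(-2^{-(k+1)}λ)) = 2, and (d^r/dz^r) a^{[k]}(exp(-2^{-(k+1)}λ)) = 0 and (d^r/dz^r) a^{[k]}(-exp(-2^{-(k+1)}λ)) = 0 for r = 1,...,μ-1. -/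

import Mathlib

open Finset Polynomial

section Stmt7Aux

lemma descPoch_eval_prod (s : ℕ) (x : ℂ) :
    (descPochhammer ℂ s).eval x = ∏ i ∈ range s, (x - i) := by
  induction s with
  | zero => simp [descPochhammer]
  | succ n ih => rw [descPochhammer_succ_right, eval_mul, ih, prod_range_succ]; simp

lemma V_eq (G : Finset ℤ) (c : ℤ → ℂ) (s : ℕ) :
    ∑ m ∈ G, c m * ∏ i ∈ range s, ((m : ℂ) - i)
      = ∑ t ∈ range (s + 1), (descPochhammer ℂ s).coeff t * ∑ m ∈ G, c m * (m : ℂ) ^ t := by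
  have h1 : ∀ m : ℤ, (∏ i ∈ range s, ((m : ℂ) - i))
      = ∑ t ∈ range (s + 1), (descPochhammer ℂ s).coeff t * (m : ℂ) ^ t := by
    intro m
    rw [← descPoch_eval_prod, eval_eq_sum_range]
    simp [descPochhammer_natDegree]
  calc ∑ m ∈ G, c m * ∏ i ∈ range s, ((m : ℂ) - i)
      = ∑ m ∈ G, ∑ t ∈ range (s + 1), (descPochhammer ℂ s).coeff t * (c m * (m : ℂ) ^ t) := by
        refine Finset.sum_congr rfl fun m _ => ?_
        rw [h1, Finset.mul_sum]; refine Finset.sum_congr rfl fun t _ => by ring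
    _ = _ := by rw [Finset.sum_comm]; refine Finset.sum_congr rfl fun t _ => by rw [Finset.mul_sum]

/-- moments ↔ falling-factorial moments -/
lemma core_iff (G : Finset ℤ) (c : ℤ → ℂ) (μ : ℕ) :
    ((∑ m ∈ G, c m = 1) ∧ ∀ s, 1 ≤ s → s < μ → ∑ m ∈ G, c m * (m : ℂ) ^ s = 0)
  ↔ ((∑ m ∈ G, c m = 1) ∧ ∀ s, 1 ≤ s → s < μ →
        ∑ m ∈ G, c m * ∏ i ∈ range s, ((m : ℂ) - i) = 0) := by
  have hc0 : ∀ s : ℕ, 1 ≤ s → (descPochhammer ℂ s).coeff 0 = 0 := by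
    intro s hs
    rw [Polynomial.coeff_zero_eq_eval_zero]
    exact descPochhammer_ne_zero_eval_zero (R := ℂ) (Nat.one_le_iff_ne_zero.mp hs)
  have hcs : ∀ s : ℕ, (descPochhammer ℂ s).coeff s = 1 := by
    intro s
    have := (monic_descPochhammer ℂ s)
    simpa [Polynomial.Monic, Polynomial.leadingCoeff, descPochhammer_natDegree] using this
  constructor
  · rintro ⟨h0, hU⟩
    refine ⟨h0, fun s hs hsμ => ?_⟩
    rw [V_eq]
    refine Finset.sum_eq_zero fun t ht => ?_
    rcases Nat.eq_or_lt_of_le (Nat.zero_le t) with h | h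
    · rw [← h, hc0 s hs, zero_mul]
    rcases Nat.eq_or_lt_of_le (Nat.lt_succ_iff.mp (mem_range.mp ht)) with h' | h'
    · rw [h', hU s hs hsμ, mul_zero]
    · rw [hU t h (lt_trans h' hsμ), mul_zero]
  · rintro ⟨h0, hV⟩
    refine ⟨h0, fun s => ?_⟩
    induction s using Nat.strong_induction_on with
    | _ s IH =>
      intro hs hsμ
      have hv := hV s hs hsμ
      rw [V_eq, Finset.sum_range_succ, hcs, one_mul] at hv
      have hz : ∑ t ∈ range s, (descPochhammer ℂ s).coeff t * ∑ m ∈ G, c m * (m : ℂ) ^ t = 0 := by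
        refine Finset.sum_eq_zero fun t ht => ?_
        rcases Nat.eq_or_lt_of_le (Nat.zero_le t) with h | h
        · rw [← h, hc0 s hs, zero_mul]
        · rw [IH t (mem_range.mp ht) h (lt_trans (mem_range.mp ht) hsμ), mul_zero]
      rw [hz, zero_add] at hv
      exact hv

lemma binom_sum (G : Finset ℤ) (c : ℤ → ℂ) (j : ℤ) (r : ℕ) :
    ∑ m ∈ G, c m * ((j : ℂ) - m) ^ r
      = ∑ t ∈ range (r + 1),
          ((-1 : ℂ) ^ (t + r) * (j : ℂ) ^ t * (r.choose t)) * ∑ m ∈ G, c m * (m : ℂ) ^ (r - t) := by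
  calc ∑ m ∈ G, c m * ((j : ℂ) - m) ^ r
      = ∑ m ∈ G, ∑ t ∈ range (r + 1),
          ((-1 : ℂ) ^ (t + r) * (j : ℂ) ^ t * (r.choose t)) * (c m * (m : ℂ) ^ (r - t)) := by
        refine Finset.sum_congr rfl fun m _ => ?_
        rw [sub_pow, Finset.mul_sum]
        refine Finset.sum_congr rfl fun t _ => by ring
    _ = _ := by
        rw [Finset.sum_comm]
        exact Finset.sum_congr rfl fun t _ => by rw [Finset.mul_sum]

lemma claimA (F : Finset ℤ) (b : ℤ → ℂ) (μ : ℕ) (hμ : 1 ≤ μ) :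
    (∀ r < μ, ∀ j : ℤ,
        (j : ℂ) ^ r = ∑ m ∈ F.filter (fun m => m % 2 = j % 2), b m * ((j : ℂ) - m) ^ r)
  ↔ ∀ ε : ℤ, (ε = 0 ∨ ε = 1) →
      ((∑ m ∈ F.filter (fun m => m % 2 = ε), b m = 1) ∧
       ∀ s, 1 ≤ s → s < μ → ∑ m ∈ F.filter (fun m => m % 2 = ε), b m * (m : ℂ) ^ s = 0) := by
  constructor
  · intro hQ ε hε
    have hεε : ε % 2 = ε := by omega
    have hfe : F.filter (fun m => m % 2 = ε % 2) = F.filter (fun m => m % 2 = ε) := by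
      rw [hεε]
    have h0 : ∑ m ∈ F.filter (fun m => m % 2 = ε), b m = 1 := by
      have := hQ 0 hμ ε
      rw [hfe] at this
      simpa using this.symm
    refine ⟨h0, fun s => ?_⟩
    induction s using Nat.strong_induction_on with
    | _ s IH =>
      intro hs hsμ
      have hq := hQ s hsμ ε
      rw [hfe, binom_sum, Finset.sum_range_succ] at hq
      have hmid : ∑ t ∈ range s,
          ((-1 : ℂ) ^ (t + s) * (ε : ℂ) ^ t * (s.choose t)) *
            ∑ m ∈ F.filter (fun m => m % 2 = ε), b m * (m : ℂ) ^ (s - t)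
          = (-1 : ℂ) ^ s * ∑ m ∈ F.filter (fun m => m % 2 = ε), b m * (m : ℂ) ^ s := by
        rw [Finset.sum_eq_single_of_mem 0 (mem_range.mpr (by omega))]
        · simp
        · intro t ht htne
          have htr : t < s := mem_range.mp ht
          rw [IH (s - t) (by omega) (by omega) (by omega), mul_zero]
      rw [hmid] at hq
      -- last term
      have hss : ((-1 : ℂ) ^ (s + s)) = 1 := Even.neg_one_pow ⟨s, rfl⟩
      rw [Nat.sub_self, Nat.choose_self, hss] at hq
      have hlast : ∑ m ∈ F.filter (fun m => m % 2 = ε), b m * (m : ℂ) ^ 0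
          = (1 : ℂ) := by
        simpa using h0
      rw [hlast] at hq
      -- hq : ε^s = (-1)^s * M s + (1 * ε^s * C(s,s)) * 1
      have hne : ((-1 : ℂ) ^ s) ≠ 0 := pow_ne_zero _ (by norm_num)
      have : (-1 : ℂ) ^ s * ∑ m ∈ F.filter (fun m => m % 2 = ε), b m * (m : ℂ) ^ s = 0 := by
        rw [Nat.cast_one] at hq
        linear_combination -hq
      exact (mul_eq_zero.mp this).resolve_left hne
  · intro hM r hr j
    rcases Int.emod_two_eq_zero_or_one j with h | h
    all_goals {
      have hM' := hM (j % 2) (by omega)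
      rw [binom_sum]
      rw [Finset.sum_eq_single_of_mem r (by simp)]
      · rw [Nat.sub_self, Nat.choose_self]
        have hss : ((-1 : ℂ) ^ (r + r)) = 1 := Even.neg_one_pow ⟨r, rfl⟩
        simp only [pow_zero]
        rw [hss]
        have : ∑ m ∈ F.filter (fun m => m % 2 = j % 2), b m * 1
            = ∑ m ∈ F.filter (fun m => m % 2 = j % 2), b m := by
          exact Finset.sum_congr rfl fun m _ => mul_one _
        rw [this, hM'.1]
        ring
      · intro t ht htr
        have h1 : 1 ≤ r - t := by
          have := mem_range.mp ht; omega
        rw [hM'.2 (r - t) h1 (by omega), mul_zero]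
    }

lemma iter_deriv_laurent (F : Finset ℤ) (c : ℤ → ℂ) (r : ℕ) :
    ∀ z : ℂ, z ≠ 0 →
      deriv^[r] (fun z : ℂ => ∑ m ∈ F, c m * z ^ m) z
        = ∑ m ∈ F, c m * (∏ i ∈ range r, ((m : ℂ) - i)) * z ^ ((m : ℤ) - r) := by
  induction r with
  | zero => intro z hz; simp
  | succ r ih =>
    intro z hz
    rw [Function.iterate_succ_apply']
    have hev : deriv^[r] (fun z : ℂ => ∑ m ∈ F, c m * z ^ m)
        =ᶠ[nhds z] fun z => ∑ m ∈ F, c m * (∏ i ∈ range r, ((m : ℂ) - i)) * z ^ ((m : ℤ) - r) := by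
      filter_upwards [IsOpen.mem_nhds isOpen_ne hz] with w hw using ih w hw
    rw [hev.deriv_eq]
    rw [deriv_fun_sum (fun m _ => ((differentiableAt_zpow.mpr (Or.inl hz)).const_mul _))]
    refine Finset.sum_congr rfl fun m _ => ?_
    rw [deriv_const_mul _ (differentiableAt_zpow.mpr (Or.inl hz)), deriv_zpow]
    rw [prod_range_succ]
    have hexp : (m : ℤ) - r - 1 = m - (r + 1 : ℕ) := by push_cast; ring
    rw [hexp]
    push_cast
    ring

lemma orig_iff_Q (a : ℤ → ℂ) (F : Finset ℤ) (hF : ∀ m, a m ≠ 0 → m ∈ F)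
    (lam : ℂ) (k : ℕ) (r : ℕ) (j : ℤ) :
    (((j : ℂ) / 2 ^ (k + 1)) ^ r * Complex.exp (lam * j / 2 ^ (k + 1))
        = ∑' l : ℤ, a (j - 2 * l) * (((l : ℂ) / 2 ^ k) ^ r * Complex.exp (lam * l / 2 ^ k)))
    ↔ ((j : ℂ) ^ r = ∑ m ∈ F.filter (fun m => m % 2 = j % 2),
          (a m * Complex.exp (-lam / 2 ^ (k + 1)) ^ m) * ((j : ℂ) - m) ^ r) := by
  set w : ℂ := Complex.exp (-lam / 2 ^ (k + 1)) with hw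
  set E : ℂ := Complex.exp (lam * j / 2 ^ (k + 1)) with hE
  have h2 : (2 : ℂ) ^ (k + 1) ≠ 0 := pow_ne_zero _ two_ne_zero
  have hEne : E ≠ 0 := Complex.exp_ne_zero _
  have hC : E / (2 : ℂ) ^ ((k + 1) * r) ≠ 0 := div_ne_zero hEne (pow_ne_zero _ two_ne_zero)
  set G := F.filter (fun m => m % 2 = j % 2) with hG
  set L := G.image (fun m => (j - m) / 2) with hL
  -- step 1 : tsum over the finset L
  have h1 : (∑' l : ℤ, a (j - 2 * l) * (((l : ℂ) / 2 ^ k) ^ r * Complex.exp (lam * l / 2 ^ k)))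
      = ∑ l ∈ L, a (j - 2 * l) * (((l : ℂ) / 2 ^ k) ^ r * Complex.exp (lam * l / 2 ^ k)) := by
    refine tsum_eq_sum fun l hl => ?_
    rcases eq_or_ne (a (j - 2 * l)) 0 with h | h
    · rw [h, zero_mul]
    · exfalso
      apply hl
      rw [hL, Finset.mem_image]
      refine ⟨j - 2 * l, ?_, by omega⟩
      rw [hG, Finset.mem_filter]
      exact ⟨hF _ h, by omega⟩
  -- step 2 : reindex
  have h2' : ∑ l ∈ L, a (j - 2 * l) * (((l : ℂ) / 2 ^ k) ^ r * Complex.exp (lam * l / 2 ^ k))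
      = ∑ m ∈ G, a (j - 2 * ((j - m) / 2)) *
          (((((j - m) / 2 : ℤ) : ℂ) / 2 ^ k) ^ r *
            Complex.exp (lam * (((j - m) / 2 : ℤ) : ℂ) / 2 ^ k)) := by
    rw [hL, Finset.sum_image]
    intro m hm m' hm' hmm
    rw [hG, Finset.mem_coe, Finset.mem_filter] at hm hm'
    simp only at hmm
    omega
  -- step 3 : per-term simplification
  have h3 : ∀ m ∈ G, a (j - 2 * ((j - m) / 2)) *
          (((((j - m) / 2 : ℤ) : ℂ) / 2 ^ k) ^ r *
            Complex.exp (lam * (((j - m) / 2 : ℤ) : ℂ) / 2 ^ k))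
      = (E / (2 : ℂ) ^ ((k + 1) * r)) * ((a m * w ^ m) * ((j : ℂ) - m) ^ r) := by
    intro m hm
    rw [hG, Finset.mem_filter] at hm
    have hdvd : (2 : ℤ) * ((j - m) / 2) = j - m := by omega
    have hjm : j - 2 * ((j - m) / 2) = m := by omega
    have hcast : (((j - m) / 2 : ℤ) : ℂ) = ((j : ℂ) - m) / 2 := by
      have h3' : (2 : ℂ) * (((j - m) / 2 : ℤ) : ℂ) = (j : ℂ) - m := by
        exact_mod_cast congrArg (Int.cast : ℤ → ℂ) hdvd
      rw [eq_div_iff (two_ne_zero)]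
      linear_combination h3'
    have hexp : Complex.exp (lam * (((j - m) / 2 : ℤ) : ℂ) / 2 ^ k) = E * w ^ m := by
      rw [hcast]
      have harg : lam * (((j : ℂ) - m) / 2) / 2 ^ k
          = lam * j / 2 ^ (k + 1) + (m : ℂ) * (-lam / 2 ^ (k + 1)) := by
        have hpow : (2 : ℂ) ^ (k + 1) = 2 ^ k * 2 := pow_succ 2 k
        field_simp [hpow]
        ring
      rw [harg, Complex.exp_add, hE, hw, Complex.exp_int_mul]
    rw [hjm, hexp, hcast]
    have hpowr : ((((j : ℂ) - m) / 2) / 2 ^ k) ^ r = ((j : ℂ) - m) ^ r / 2 ^ ((k + 1) * r) := by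
      rw [div_div, div_pow, ← pow_succ', ← pow_mul]
    rw [hpowr]
    ring
  have h4 : ((j : ℂ) / 2 ^ (k + 1)) ^ r * E
      = (E / (2 : ℂ) ^ ((k + 1) * r)) * (j : ℂ) ^ r := by
    rw [div_pow, ← pow_mul]
    ring
  rw [h1, h2', Finset.sum_congr rfl h3, ← Finset.mul_sum, h4, mul_right_inj' hC]


lemma parity_split (F : Finset ℤ) (g : ℤ → ℂ) :
    ∑ m ∈ F, g m = ∑ m ∈ F.filter (fun m => m % 2 = 0), g m
      + ∑ m ∈ F.filter (fun m => m % 2 = 1), g m := by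
  rw [← Finset.sum_filter_add_sum_filter_not F (fun m => m % 2 = 0)]
  congr 1
  refine Finset.sum_congr (Finset.filter_congr fun m _ => ?_) fun _ _ => rfl
  omega

lemma claimB (a : ℤ → ℂ) (F : Finset ℤ) (S : ℂ → ℂ)
    (hS : ∀ z, S z = ∑ m ∈ F, a m * z ^ m) (w : ℂ) (hw : w ≠ 0) (μ : ℕ) :
    (S (-w) = 0 ∧ S w = 2 ∧ ∀ r : ℕ, 1 ≤ r → r < μ →
        iteratedDeriv r S w = 0 ∧ iteratedDeriv r S (-w) = 0)
    ↔ ∀ ε : ℤ, (ε = 0 ∨ ε = 1) →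
        ((∑ m ∈ F.filter (fun m => m % 2 = ε), a m * w ^ m = 1) ∧
         ∀ s, 1 ≤ s → s < μ →
           ∑ m ∈ F.filter (fun m => m % 2 = ε), (a m * w ^ m) * ∏ i ∈ range s, ((m : ℂ) - i) = 0) := by
  have hnw : -w ≠ 0 := neg_ne_zero.mpr hw
  have hfun : S = fun z : ℂ => ∑ m ∈ F, a m * z ^ m := funext hS
  set b : ℤ → ℂ := fun m => a m * w ^ m with hb
  set U : ℤ → ℂ := fun ε => ∑ m ∈ F.filter (fun m => m % 2 = ε), b m with hU
  set V : ℤ → ℕ → ℂ := fun ε s =>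
    ∑ m ∈ F.filter (fun m => m % 2 = ε), b m * ∏ i ∈ range s, ((m : ℂ) - i) with hV
  have hsign0 : ∀ m : ℤ, m % 2 = 0 → ((-w) ^ (m : ℤ) : ℂ) = w ^ (m : ℤ) := by
    intro m hm
    rw [show -w = -1 * w by ring, mul_zpow, Even.neg_one_zpow (Int.even_iff.mpr hm), one_mul]
  have hsign1 : ∀ m : ℤ, m % 2 = 1 → ((-w) ^ (m : ℤ) : ℂ) = -w ^ (m : ℤ) := by
    intro m hm
    rw [show -w = -1 * w by ring, mul_zpow, Odd.neg_one_zpow (Int.odd_iff.mpr hm)]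
    ring
  -- value at w
  have hSw : S w = U 0 + U 1 := by rw [hS, parity_split]
  -- value at -w
  have hSnw : S (-w) = U 0 - U 1 := by
    rw [hS, parity_split F (fun m => a m * (-w) ^ m)]
    have hA : ∑ m ∈ F.filter (fun m => m % 2 = 0), a m * (-w) ^ m = U 0 := by
      refine Finset.sum_congr rfl fun m hm => ?_
      rw [hsign0 m (Finset.mem_filter.mp hm).2]
    have hB : ∑ m ∈ F.filter (fun m => m % 2 = 1), a m * (-w) ^ m = -U 1 := by
      rw [hU, ← Finset.sum_neg_distrib]
      refine Finset.sum_congr rfl fun m hm => ?_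
      rw [hsign1 m (Finset.mem_filter.mp hm).2, hb]
      ring
    rw [hA, hB]
    ring
  -- derivatives
  have hD : ∀ (r : ℕ) (z : ℂ), z ≠ 0 → iteratedDeriv r S z
      = ∑ m ∈ F, a m * (∏ i ∈ range r, ((m : ℂ) - i)) * z ^ ((m : ℤ) - r) := by
    intro r z hz
    rw [hfun, iteratedDeriv_eq_iterate]
    exact iter_deriv_laurent F a r z hz
  have hDw : ∀ r : ℕ, iteratedDeriv r S w = w ^ (-(r : ℤ)) * (V 0 r + V 1 r) := by
    intro r
    rw [hD r w hw, parity_split F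
      (fun m => a m * (∏ i ∈ range r, ((m : ℂ) - i)) * w ^ ((m : ℤ) - r))]
    rw [hV, mul_add, Finset.mul_sum, Finset.mul_sum]
    congr 1 <;> refine Finset.sum_congr rfl fun m hm => ?_ <;>
      rw [show (m : ℤ) - r = m + (-(r:ℤ)) by ring, zpow_add₀ hw, hb] <;> ring
  have hDnw : ∀ r : ℕ, iteratedDeriv r S (-w) = (-w) ^ (-(r : ℤ)) * (V 0 r - V 1 r) := by
    intro r
    rw [hD r (-w) hnw, parity_split F
      (fun m => a m * (∏ i ∈ range r, ((m : ℂ) - i)) * (-w) ^ ((m : ℤ) - r))]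
    have e0 : ∑ m ∈ F.filter (fun m => m % 2 = 0),
        a m * (∏ i ∈ range r, ((m : ℂ) - i)) * (-w) ^ ((m : ℤ) - r)
        = (-w) ^ (-(r : ℤ)) * V 0 r := by
      rw [hV, Finset.mul_sum]
      refine Finset.sum_congr rfl fun m hm => ?_
      rw [show (m : ℤ) - r = m + (-(r:ℤ)) by ring, zpow_add₀ hnw,
        hsign0 m (Finset.mem_filter.mp hm).2, hb]
      ring
    have e1 : ∑ m ∈ F.filter (fun m => m % 2 = 1),
        a m * (∏ i ∈ range r, ((m : ℂ) - i)) * (-w) ^ ((m : ℤ) - r)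
        = -((-w) ^ (-(r : ℤ)) * V 1 r) := by
      rw [hV, Finset.mul_sum, ← Finset.sum_neg_distrib]
      refine Finset.sum_congr rfl fun m hm => ?_
      rw [show (m : ℤ) - r = m + (-(r:ℤ)) by ring, zpow_add₀ hnw,
        hsign1 m (Finset.mem_filter.mp hm).2, hb]
      ring
    rw [e0, e1]
    ring
  have hwz : ∀ r : ℕ, (w : ℂ) ^ (-(r : ℤ)) ≠ 0 := fun r => zpow_ne_zero _ hw
  have hnwz : ∀ r : ℕ, (-w : ℂ) ^ (-(r : ℤ)) ≠ 0 := fun r => zpow_ne_zero _ hnw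
  constructor
  · rintro ⟨h1, h2, h3⟩
    rw [hSnw] at h1
    rw [hSw] at h2
    intro ε hε
    have hV0 : ∀ s, 1 ≤ s → s < μ → V 0 s = 0 ∧ V 1 s = 0 := by
      intro s hs hsμ
      obtain ⟨hd1, hd2⟩ := h3 s hs hsμ
      rw [hDw] at hd1
      rw [hDnw] at hd2
      have e1 : V 0 s + V 1 s = 0 := by
        rcases mul_eq_zero.mp hd1 with h | h
        · exact absurd h (hwz s)
        · exact h
      have e2 : V 0 s - V 1 s = 0 := by
        rcases mul_eq_zero.mp hd2 with h | h
        · exact absurd h (hnwz s)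
        · exact h
      exact ⟨by linear_combination (e1 + e2) / 2, by linear_combination (e1 - e2) / 2⟩
    rcases hε with h | h <;> subst h
    · exact ⟨by linear_combination (h2 + h1) / 2, fun s hs hsμ => (hV0 s hs hsμ).1⟩
    · exact ⟨by linear_combination (h2 - h1) / 2, fun s hs hsμ => (hV0 s hs hsμ).2⟩
  · intro hM
    have h0 := hM 0 (Or.inl rfl)
    have h1 := hM 1 (Or.inr rfl)
    have hU0 : U 0 = 1 := h0.1
    have hU1 : U 1 = 1 := h1.1
    refine ⟨by rw [hSnw, hU0, hU1]; ring, by rw [hSw, hU0, hU1]; ring, fun r hr hrμ => ?_⟩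
    have hV0 : V 0 r = 0 := h0.2 r hr hrμ
    have hV1 : V 1 r = 0 := h1.2 r hr hrμ
    constructor
    · rw [hDw, hV0, hV1]; ring
    · rw [hDnw, hV0, hV1]; ring

end Stmt7Aux

/-- Theorem on reproduction of `x^r e^{λx}`, `r = 0,…,μ-1`, by a non-stationary scheme:
this happens stepwise if and only if the symbols `a^{[k]}` satisfy
`a^{[k]}(-e^{-2^{-(k+1)}λ}) = 0`, `a^{[k]}(e^{-2^{-(k+1)}λ}) = 2`, and all derivatives
of order `1,…,μ-1` of `a^{[k]}` vanish at `±e^{-2^{-(k+1)}λ}`, for all `k`. -/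
theorem stmt_7 (a : ℕ → ℤ → ℂ) (hfin : ∀ k : ℕ, (Function.support (a k)).Finite)
    (S : ℕ → ℂ → ℂ) (hS : ∀ (k : ℕ) (z : ℂ), S k z = ∑' j : ℤ, a k j * z ^ j)
    (lam : ℂ) (μ : ℕ) (hμ : 1 ≤ μ) :
    (∀ r : ℕ, r ≤ μ - 1 →
      ∀ (k : ℕ) (j : ℤ),
        ((j : ℂ) / 2 ^ (k + 1)) ^ r * Complex.exp (lam * j / 2 ^ (k + 1))
          = ∑' l : ℤ, a k (j - 2 * l) * (((l : ℂ) / 2 ^ k) ^ r * Complex.exp (lam * l / 2 ^ k)))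
    ↔ (∀ k : ℕ,
        S k (-Complex.exp (-lam / 2 ^ (k + 1))) = 0 ∧
        S k (Complex.exp (-lam / 2 ^ (k + 1))) = 2 ∧
        ∀ r : ℕ, 1 ≤ r → r ≤ μ - 1 →
          iteratedDeriv r (S k) (Complex.exp (-lam / 2 ^ (k + 1))) = 0 ∧
          iteratedDeriv r (S k) (-Complex.exp (-lam / 2 ^ (k + 1))) = 0) := by
  have hk : ∀ k : ℕ,
      (∀ r : ℕ, r < μ → ∀ j : ℤ,
        ((j : ℂ) / 2 ^ (k + 1)) ^ r * Complex.exp (lam * j / 2 ^ (k + 1))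
          = ∑' l : ℤ, a k (j - 2 * l) * (((l : ℂ) / 2 ^ k) ^ r * Complex.exp (lam * l / 2 ^ k)))
      ↔ (S k (-Complex.exp (-lam / 2 ^ (k + 1))) = 0 ∧
         S k (Complex.exp (-lam / 2 ^ (k + 1))) = 2 ∧
         ∀ r : ℕ, 1 ≤ r → r ≤ μ - 1 →
           iteratedDeriv r (S k) (Complex.exp (-lam / 2 ^ (k + 1))) = 0 ∧
           iteratedDeriv r (S k) (-Complex.exp (-lam / 2 ^ (k + 1))) = 0) := by
    intro k
    set F : Finset ℤ := (hfin k).toFinset with hF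
    have hFmem : ∀ m : ℤ, a k m ≠ 0 → m ∈ F := fun m hm => (hfin k).mem_toFinset.mpr hm
    set w : ℂ := Complex.exp (-lam / 2 ^ (k + 1)) with hw
    have hwne : w ≠ 0 := Complex.exp_ne_zero _
    set b : ℤ → ℂ := fun m => a k m * w ^ m with hb
    have hSsum : ∀ z : ℂ, S k z = ∑ m ∈ F, a k m * z ^ m := by
      intro z
      rw [hS]
      refine tsum_eq_sum fun m hm => ?_
      have : a k m = 0 := by
        by_contra h
        exact hm (hFmem m h)
      rw [this, zero_mul]
    -- left side chain
    have e0 : (∀ r : ℕ, r < μ → ∀ j : ℤ,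
        ((j : ℂ) / 2 ^ (k + 1)) ^ r * Complex.exp (lam * j / 2 ^ (k + 1))
          = ∑' l : ℤ, a k (j - 2 * l) * (((l : ℂ) / 2 ^ k) ^ r * Complex.exp (lam * l / 2 ^ k)))
      ↔ (∀ r : ℕ, r < μ → ∀ j : ℤ,
        (j : ℂ) ^ r = ∑ m ∈ F.filter (fun m => m % 2 = j % 2), b m * ((j : ℂ) - m) ^ r) :=
      forall_congr' fun r => imp_congr_right fun _ => forall_congr' fun j =>
        orig_iff_Q (a k) F hFmem lam k r j
    have e1 := claimA F b μ hμ
    -- right side chain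
    have e2 := claimB (a k) F (S k) hSsum w hwne μ
    have e3 : (S k (-w) = 0 ∧ S k w = 2 ∧
        ∀ r : ℕ, 1 ≤ r → r ≤ μ - 1 →
          iteratedDeriv r (S k) w = 0 ∧ iteratedDeriv r (S k) (-w) = 0)
      ↔ (S k (-w) = 0 ∧ S k w = 2 ∧
        ∀ r : ℕ, 1 ≤ r → r < μ →
          iteratedDeriv r (S k) w = 0 ∧ iteratedDeriv r (S k) (-w) = 0) := by
      constructor <;> rintro ⟨x, y, z⟩ <;>
        exact ⟨x, y, fun r h1 h2 => z r h1 (by omega)⟩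
    have e4 : (∀ ε : ℤ, (ε = 0 ∨ ε = 1) →
        ((∑ m ∈ F.filter (fun m => m % 2 = ε), b m = 1) ∧
         ∀ s, 1 ≤ s → s < μ → ∑ m ∈ F.filter (fun m => m % 2 = ε), b m * (m : ℂ) ^ s = 0))
      ↔ (∀ ε : ℤ, (ε = 0 ∨ ε = 1) →
        ((∑ m ∈ F.filter (fun m => m % 2 = ε), a k m * w ^ m = 1) ∧
         ∀ s, 1 ≤ s → s < μ →
           ∑ m ∈ F.filter (fun m => m % 2 = ε), (a k m * w ^ m) * ∏ i ∈ range s, ((m : ℂ) - i) = 0)) :=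
      forall_congr' fun ε => imp_congr_right fun _ =>
        core_iff (F.filter (fun m => m % 2 = ε)) b μ
    exact e0.trans (e1.trans (e4.trans (e2.symm.trans e3.symm)))
  constructor
  · intro hL k
    exact (hk k).mp fun r hr j => hL r (by omega) k j
  · intro hR r hr k j
    exact (hk k).mpr (hR k) r (by omega) j
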